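/- arXiv:1507.03869 — 2 statements merged into one kernel-verified Lean document; each statement's English description precedes it below -/
import Mathlib

section
/- For every ε > 0 there exists a constant C_ε > 0 such that for every integer D that is not a perfect square and every integer N ≥ 1, the number of pairs (A,B) ∈ ℤ² with |A| ≤ N, |B| ≤ N and such that D·((A+B−1)² − 4AB) is the square of a rational number is at most C_ε·|D|^ε·N^{1+ε}. -/
set_option maxHeartbeats 1000000


lemma aux_rat_sq {q : ℤ} {r : ℚ} (h : (q:ℚ) = r^2) : ∃ s : ℤ, q = s^2 := by
  have hs : IsSquare (q:ℚ) := ⟨r, by rw [h]; ring⟩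
  obtain ⟨s, hs⟩ := Rat.isSquare_intCast_iff.mp hs
  exact ⟨s, by rw [hs]; ring⟩

lemma aux_decomp (D : ℤ) (hD : ¬ IsSquare D) :
    ∃ d e : ℤ, Squarefree d ∧ ¬ IsSquare d ∧ D = e^2 * d := by
  obtain ⟨a, b, hab, ha⟩ := Nat.sq_mul_squarefree D.natAbs
  set d : ℤ := if 0 ≤ D then (a:ℤ) else -(a:ℤ) with hd
  have hDd : D = (b:ℤ)^2 * d := by
    have h1 : (D.natAbs : ℤ) = (b:ℤ)^2 * a := by exact_mod_cast congrArg (Nat.cast : ℕ → ℤ) hab.symm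
    rcases le_or_gt 0 D with h | h
    · rw [hd, if_pos h]; rwa [Int.natAbs_of_nonneg h] at h1
    · rw [hd, if_neg (not_le.mpr h)]
      rw [Int.ofNat_natAbs_of_nonpos h.le] at h1
      linarith
  have hsf : Squarefree d := by
    rw [← Int.squarefree_natAbs]
    rw [hd]; split <;> simpa using ha
  refine ⟨d, b, hsf, ?_, hDd⟩
  rintro ⟨c, hc⟩
  exact hD ⟨b*c, by rw [hDd, hc]; ring⟩

lemma aux_extract {d e D k s : ℤ} (hd : Squarefree d) (he : e ≠ 0) (hD : D = e^2*d)
    (h : D * k = s^2) : ∃ m : ℤ, 0 ≤ m ∧ k = d * m^2 := by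
  have hd0 : d ≠ 0 := hd.ne_zero
  have h1 : e^2 ∣ s^2 := ⟨d*k, by rw [← h, hD]; ring⟩
  obtain ⟨t, ht⟩ := (Int.pow_dvd_pow_iff two_ne_zero).mp h1
  have h2 : d * k = t^2 := by
    have he2 : (e:ℤ)^2 ≠ 0 := pow_ne_zero _ he
    have : e^2 * (d*k) = e^2 * t^2 := by rw [← mul_assoc, ← hD, h, ht]; ring
    exact mul_left_cancel₀ he2 this
  have h3 : d ∣ t := (hd.dvd_pow_iff_dvd two_ne_zero).mp ⟨k, h2.symm⟩
  obtain ⟨m, hm⟩ := h3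
  refine ⟨|m|, abs_nonneg _, mul_left_cancel₀ hd0 ?_⟩
  rw [h2, hm, sq_abs m]; ring


lemma aux_slice (T : Finset ℤ) (a h : ℝ) (hh : 0 ≤ h)
    (hT : ∀ x ∈ T, 0 ≤ (x:ℝ) ∧ a ≤ (x:ℝ)^2 ∧ (x:ℝ)^2 ≤ a + h) :
    (T.card : ℝ) ≤ 1 + Real.sqrt h ∧ (1 ≤ a → (T.card : ℝ) ≤ 1 + h / (2*Real.sqrt a)) := by
  rcases T.eq_empty_or_nonempty with rfl | hne
  · constructor
    · simp; positivity
    · intro _; simp; positivity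
  set x0 := T.min' hne with hx0def
  set x1 := T.max' hne with hx1def
  have h0 : x0 ∈ T := T.min'_mem hne
  have h1 : x1 ∈ T := T.max'_mem hne
  have hle : x0 ≤ x1 := T.min'_le _ h1
  have hcard : (T.card : ℝ) ≤ (x1 : ℝ) - x0 + 1 := by
    have hsub : T ⊆ Finset.Icc x0 x1 := fun x hx =>
      Finset.mem_Icc.mpr ⟨T.min'_le x hx, T.le_max' x hx⟩
    have hc := Finset.card_le_card hsub
    rw [Int.card_Icc] at hc
    have hc2 : (T.card : ℤ) ≤ x1 + 1 - x0 := by omega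
    have : ((T.card : ℤ) : ℝ) ≤ ((x1 + 1 - x0 : ℤ) : ℝ) := by exact_mod_cast hc2
    push_cast at this
    linarith
  obtain ⟨hx0nn, hx0a, -⟩ := hT x0 h0
  obtain ⟨hx1nn, -, hx1b⟩ := hT x1 h1
  have hler : (x0:ℝ) ≤ x1 := by exact_mod_cast hle
  have key : ((x1:ℝ) - x0) * ((x1:ℝ) + x0) ≤ h := by nlinarith
  constructor
  · have hsq : ((x1:ℝ) - x0)^2 ≤ h := by nlinarith
    have : (x1:ℝ) - x0 ≤ Real.sqrt h := by
      rw [show (x1:ℝ) - x0 = Real.sqrt (((x1:ℝ) - x0)^2) from (Real.sqrt_sq (by linarith)).symm]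
      exact Real.sqrt_le_sqrt hsq
    linarith
  · intro ha
    have hsa : Real.sqrt a ≤ (x0:ℝ) := by
      rw [show (x0:ℝ) = Real.sqrt ((x0:ℝ)^2) from (Real.sqrt_sq hx0nn).symm]
      exact Real.sqrt_le_sqrt hx0a
    have hsa1 : (1:ℝ) ≤ Real.sqrt a := by
      rw [show (1:ℝ) = Real.sqrt 1 from (Real.sqrt_one).symm]
      exact Real.sqrt_le_sqrt ha
    have hpos : 0 < 2 * Real.sqrt a := by linarith
    have : ((x1:ℝ) - x0) * (2 * Real.sqrt a) ≤ h := by nlinarith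
    have : (x1:ℝ) - x0 ≤ h / (2 * Real.sqrt a) := (le_div_iff₀ hpos).mpr this
    linarith

lemma aux_harm : ∀ n : ℕ, ∑ μ ∈ Finset.Icc (1:ℤ) n, ((μ:ℝ))⁻¹ ≤ 1 + Real.log n := by
  intro n
  induction n with
  | zero => simp
  | succ n ih =>
    rcases Nat.eq_zero_or_pos n with rfl | hn
    · simp
    have hins : Finset.Icc (1:ℤ) ((n+1:ℕ):ℤ) = insert ((n:ℤ)+1) (Finset.Icc (1:ℤ) n) := by
      ext x; simp only [Finset.mem_Icc, Finset.mem_insert]; push_cast; omega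
    have hstep : ∑ μ ∈ Finset.Icc (1:ℤ) (n+1:ℕ), ((μ:ℝ))⁻¹
        = (∑ μ ∈ Finset.Icc (1:ℤ) n, ((μ:ℝ))⁻¹) + ((n:ℝ)+1)⁻¹ := by
      rw [hins, Finset.sum_insert (by simp)]
      push_cast; ring
    rw [hstep]
    have hlog : Real.log n + ((n:ℝ)+1)⁻¹ ≤ Real.log (n+1) := by
      have hn0 : (0:ℝ) < n := by exact_mod_cast hn
      have h2 : Real.log ((n:ℝ)/((n:ℝ)+1)) ≤ (n:ℝ)/((n:ℝ)+1) - 1 :=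
        Real.log_le_sub_one_of_pos (by positivity)
      rw [Real.log_div (by positivity) (by positivity)] at h2
      have : (n:ℝ)/((n:ℝ)+1) - 1 = -((n:ℝ)+1)⁻¹ := by field_simp; ring
      rw [this] at h2
      linarith
    push_cast
    linarith


open Finset

lemma aux_Fcard (d : ℤ) (hd : 2 ≤ d ∨ d ≤ -1) (N : ℕ) (hN : 1 ≤ N) :
    (((Finset.Icc (-(2*(N:ℤ)+1)) (2*(N:ℤ)+1) ×ˢ Finset.Icc (0:ℤ) (2*(N:ℤ)+1)).filter
      (fun p => |p.1^2 - d*p.2^2| ≤ 4*(N:ℤ))).card : ℝ)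
      ≤ 50*N + 8*N*Real.log (2*N+1) := by
  have hN1 : (1:ℝ) ≤ N := by exact_mod_cast hN
  have hNpos : (0:ℝ) < N := by linarith
  set X : ℤ := 2*(N:ℤ)+1 with hX
  set F : Finset (ℤ×ℤ) := (Finset.Icc (-X) X ×ˢ Finset.Icc (0:ℤ) X).filter
      (fun p => |p.1^2 - d*p.2^2| ≤ 4*(N:ℤ)) with hF
  set s : ℤ := (Nat.sqrt (4*N) : ℤ) with hs
  have hs0 : 0 ≤ s := by positivity
  have hs2 : s^2 ≤ 4*(N:ℤ) := by
    have := Nat.sqrt_le' (4*N)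
    rw [hs]; push_cast; nlinarith [this]
  have hs4 : ∀ y : ℤ, 0 ≤ y → y^2 ≤ 4*(N:ℤ) → y ≤ s := by
    intro y hy hy2
    have h2 : ((y.natAbs * y.natAbs : ℕ) : ℤ) = y * y := Int.natAbs_mul_self
    have h1 : y.natAbs * y.natAbs ≤ 4*N := by
      have h3 : ((y.natAbs * y.natAbs : ℕ) : ℤ) ≤ ((4*N : ℕ) : ℤ) := by
        rw [h2]; push_cast; nlinarith
      exact_mod_cast h3
    have := Nat.le_sqrt.mpr h1
    omega
  have hsX : s ≤ X := by nlinarith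
  have hsr : (s:ℝ) ≤ 2*Real.sqrt N := by
    have h1 : ((s:ℝ))^2 ≤ 4*N := by exact_mod_cast hs2
    have h2 : (s:ℝ) = Real.sqrt ((s:ℝ)^2) := (Real.sqrt_sq (by exact_mod_cast hs0)).symm
    rw [h2]
    calc Real.sqrt ((s:ℝ)^2) ≤ Real.sqrt (4*N) := Real.sqrt_le_sqrt h1
      _ = Real.sqrt 4 * Real.sqrt N := Real.sqrt_mul (by norm_num) _
      _ = 2 * Real.sqrt N := by
          rw [show (4:ℝ) = 2^2 by norm_num, Real.sqrt_sq (by norm_num)]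
  have hsqN : Real.sqrt N ≤ N := by
    calc Real.sqrt N ≤ Real.sqrt ((N:ℝ)^2) := Real.sqrt_le_sqrt (by nlinarith)
      _ = N := Real.sqrt_sq hNpos.le
  have hsqNn : 0 ≤ Real.sqrt N := Real.sqrt_nonneg _
  have hlogpos : 0 ≤ Real.log (2*N+1) := Real.log_nonneg (by linarith)
  have hNsq : Real.sqrt N * Real.sqrt N = N := Real.mul_self_sqrt hNpos.le
  rcases hd with hd | hd
  · -- case 2 ≤ d : main case
    have hdR : (2:ℝ) ≤ (d:ℝ) := by exact_mod_cast hd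
    have hfib : F.card = ∑ μ ∈ Finset.Icc (0:ℤ) X, (F.filter (fun p => p.2 = μ)).card :=
      Finset.card_eq_sum_card_fiberwise (fun p hp => by
        rw [Finset.mem_coe, hF, Finset.mem_filter, Finset.mem_product] at hp; exact Finset.mem_coe.mpr hp.1.2)
    have hslice : ∀ μ ∈ Finset.Icc (0:ℤ) X, ((F.filter (fun p => p.2 = μ)).card : ℝ)
        ≤ if μ ≤ s then 2 + 2*Real.sqrt (8*N) else 2 + 8*N/(μ:ℝ) := by
      intro μ hμ
      rw [Finset.mem_Icc] at hμ
      set Sμ := (Finset.Icc (-X) X).filter (fun x => |x^2 - d*μ^2| ≤ 4*(N:ℤ)) with hSμ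
      have h1 : (F.filter (fun p => p.2 = μ)).card ≤ Sμ.card := by
        apply Finset.card_le_card_of_injOn Prod.fst
        · intro p hp
          rw [Finset.mem_coe, Finset.mem_filter] at hp
          obtain ⟨hp1, hp2⟩ := hp
          rw [hF, Finset.mem_filter, Finset.mem_product] at hp1
          rw [Finset.mem_coe, hSμ, Finset.mem_filter]
          refine ⟨hp1.1.1, ?_⟩
          rw [← hp2]; exact hp1.2
        · intro p hp q hq hpq
          simp only [Finset.coe_filter, Set.mem_setOf_eq] at hp hq
          exact Prod.ext hpq (hp.2.trans hq.2.symm)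
      set a : ℝ := (d:ℝ)*(μ:ℝ)^2 - 4*N with ha
      have hcond : ∀ x : ℤ, x ∈ Sμ → a ≤ (x:ℝ)^2 ∧ (x:ℝ)^2 ≤ a + 8*N := by
        intro x hx
        rw [hSμ, Finset.mem_filter] at hx
        have habs := abs_le.mp hx.2
        have hc1 : (x:ℝ)^2 - (d:ℝ)*(μ:ℝ)^2 ≤ 4*N := by exact_mod_cast habs.2
        have hc2 : -(4*(N:ℝ)) ≤ (x:ℝ)^2 - (d:ℝ)*(μ:ℝ)^2 := by exact_mod_cast habs.1
        constructor <;> [linarith; linarith]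
      set P := Sμ.filter (fun x => 0 ≤ x) with hP
      set Q := Sμ.filter (fun x => ¬ 0 ≤ x) with hQ
      have hPQ : P.card + Q.card = Sμ.card :=
        Finset.card_filter_add_card_filter_not _
      have ha8 : (0:ℝ) ≤ 8*N := by positivity
      have hPhyp : ∀ x ∈ P, 0 ≤ (x:ℝ) ∧ a ≤ (x:ℝ)^2 ∧ (x:ℝ)^2 ≤ a + 8*N := by
        intro x hx
        rw [hP, Finset.mem_filter] at hx
        exact ⟨by exact_mod_cast hx.2, (hcond x hx.1).1, (hcond x hx.1).2⟩
      set Q' := Q.image (fun x => -x) with hQ'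
      have hQcard : Q'.card = Q.card := Finset.card_image_of_injective _ neg_injective
      have hQhyp : ∀ x ∈ Q', 0 ≤ (x:ℝ) ∧ a ≤ (x:ℝ)^2 ∧ (x:ℝ)^2 ≤ a + 8*N := by
        intro x hx
        rw [hQ', Finset.mem_image] at hx
        obtain ⟨y, hy, rfl⟩ := hx
        rw [hQ, Finset.mem_filter] at hy
        have h2 := hcond y hy.1
        have h3 : ¬ (0:ℤ) ≤ y := hy.2
        refine ⟨?_, ?_, ?_⟩
        · exact_mod_cast (by omega : (0:ℤ) ≤ -y)
        · push_cast; nlinarith [h2.1]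
        · push_cast; nlinarith [h2.2]
      have bP := aux_slice P a (8*N) ha8 hPhyp
      have bQ := aux_slice Q' a (8*N) ha8 hQhyp
      by_cases hμs : μ ≤ s
      · rw [if_pos hμs]
        have := bP.1; have := bQ.1
        have hSc : (Sμ.card : ℝ) = (P.card : ℝ) + (Q.card : ℝ) := by exact_mod_cast hPQ.symm
        have h1R : ((F.filter (fun p => p.2 = μ)).card : ℝ) ≤ (Sμ.card : ℝ) := by exact_mod_cast h1
        rw [← hQcard] at hSc
        linarith
      · rw [if_neg hμs]
        push_neg at hμs
        have hμ1 : 1 ≤ μ := by linarith [hs0]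
        have hμ2 : 4*(N:ℤ) < μ^2 := by
          by_contra hcon
          push_neg at hcon
          exact absurd (hs4 μ hμ.1 hcon) (by omega)
        have hμ2R : 4*(N:ℝ) + 1 ≤ (μ:ℝ)^2 := by exact_mod_cast hμ2
        have hμR : (1:ℝ) ≤ (μ:ℝ) := by exact_mod_cast hμ1
        have ha1 : 1 ≤ a := by nlinarith
        have haμ : (μ:ℝ)^2 ≤ a := by nlinarith
        have hsqa : (μ:ℝ) ≤ Real.sqrt a := by
          rw [show (μ:ℝ) = Real.sqrt ((μ:ℝ)^2) from (Real.sqrt_sq (by linarith)).symm]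
          exact Real.sqrt_le_sqrt haμ
        have hsqapos : (0:ℝ) < Real.sqrt a := by linarith
        have hdiv : 8*(N:ℝ) / (2*Real.sqrt a) ≤ 4*N/(μ:ℝ) := by
          rw [div_le_div_iff₀ (by linarith) (by linarith)]
          nlinarith
        have hbP := bP.2 ha1
        have hbQ := bQ.2 ha1
        have hSc : (Sμ.card : ℝ) = (P.card : ℝ) + (Q.card : ℝ) := by exact_mod_cast hPQ.symm
        have h1R : ((F.filter (fun p => p.2 = μ)).card : ℝ) ≤ (Sμ.card : ℝ) := by exact_mod_cast h1
        rw [← hQcard] at hSc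
        have : 4*(N:ℝ)/(μ:ℝ) + 4*N/(μ:ℝ) = 8*N/(μ:ℝ) := by ring
        linarith
    have hsum : (F.card : ℝ) ≤ ∑ μ ∈ Finset.Icc (0:ℤ) X,
        (if μ ≤ s then 2 + 2*Real.sqrt (8*N) else 2 + 8*N/(μ:ℝ)) := by
      calc (F.card : ℝ) = ∑ μ ∈ Finset.Icc (0:ℤ) X, ((F.filter (fun p => p.2 = μ)).card : ℝ) := by
            rw [hfib]; push_cast; ring
        _ ≤ _ := Finset.sum_le_sum hslice
    have hsplit : ∑ μ ∈ Finset.Icc (0:ℤ) X, (if μ ≤ s then (2:ℝ) + 2*Real.sqrt (8*N) else 2 + 8*N/(μ:ℝ))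
        = (∑ _μ ∈ Finset.Icc (0:ℤ) s, ((2:ℝ) + 2*Real.sqrt (8*N)))
          + ∑ μ ∈ Finset.Icc (s+1) X, ((2:ℝ) + 8*N/(μ:ℝ)) := by
      rw [← Finset.sum_filter_add_sum_filter_not (Finset.Icc (0:ℤ) X) (fun μ => μ ≤ s)]
      congr 1
      · apply Finset.sum_congr
        · ext μ; simp only [Finset.mem_filter, Finset.mem_Icc]; omega
        · intro μ hμ; rw [Finset.mem_Icc] at hμ; rw [if_pos hμ.2]
      · apply Finset.sum_congr
        · ext μ; simp only [Finset.mem_filter, Finset.mem_Icc]; omega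
        · intro μ hμ; rw [Finset.mem_Icc] at hμ; rw [if_neg (by omega)]
    have hsum1 : (∑ _μ ∈ Finset.Icc (0:ℤ) s, ((2:ℝ) + 2*Real.sqrt (8*N)))
        ≤ (2*Real.sqrt N + 1) * (2 + 2*Real.sqrt (8*N)) := by
      rw [Finset.sum_const, Int.card_Icc]
      have hcd : (((s + 1 - 0).toNat : ℤ) : ℝ) = (s:ℝ) + 1 := by
        have : ((s + 1 - 0).toNat : ℤ) = s + 1 := by omega
        rw [this]; push_cast; ring
      have h8 : (0:ℝ) ≤ 2 + 2*Real.sqrt (8*N) := by positivity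
      rw [nsmul_eq_mul]
      have : (((s + 1 - 0).toNat : ℕ) : ℝ) = (s:ℝ) + 1 := by exact_mod_cast hcd
      rw [this]
      have h2 : (s:ℝ) + 1 ≤ 2*Real.sqrt N + 1 := by linarith
      exact mul_le_mul_of_nonneg_right h2 h8
    have hsum2 : ∑ μ ∈ Finset.Icc (s+1) X, ((2:ℝ) + 8*N/(μ:ℝ))
        ≤ 2*(2*(N:ℝ)+1) + 8*N*(1 + Real.log (2*N+1)) := by
      rw [Finset.sum_add_distrib]
      have hc1 : ∑ _μ ∈ Finset.Icc (s+1) X, (2:ℝ) ≤ 2*(2*(N:ℝ)+1) := by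
        rw [Finset.sum_const, Int.card_Icc, nsmul_eq_mul]
        have hcd : (((X + 1 - (s+1)).toNat : ℤ) : ℝ) ≤ (2*(N:ℝ)+1) := by
          have h1 : ((X + 1 - (s+1)).toNat : ℤ) ≤ X := by omega
          have h2R : (((X + 1 - (s+1)).toNat : ℤ) : ℝ) ≤ ((X : ℤ) : ℝ) := by exact_mod_cast h1
          rw [hX] at h2R; push_cast at h2R ⊢; linarith
        have : (((X + 1 - (s+1)).toNat : ℕ) : ℝ) ≤ 2*(N:ℝ)+1 := by exact_mod_cast hcd
        linarith
      have hc2 : ∑ μ ∈ Finset.Icc (s+1) X, 8*(N:ℝ)/(μ:ℝ) ≤ 8*N*(1 + Real.log (2*N+1)) := by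
        have he : ∀ μ ∈ Finset.Icc (s+1) X, 8*(N:ℝ)/(μ:ℝ) = 8*(N:ℝ) * ((μ:ℝ))⁻¹ := by
          intro μ hμ; rw [div_eq_mul_inv]
        rw [Finset.sum_congr rfl he, ← Finset.mul_sum]
        have hsub : Finset.Icc (s+1) X ⊆ Finset.Icc (1:ℤ) X := by
          intro μ hμ; rw [Finset.mem_Icc] at *; omega
        have hmono : ∑ μ ∈ Finset.Icc (s+1) X, ((μ:ℝ))⁻¹ ≤ ∑ μ ∈ Finset.Icc (1:ℤ) X, ((μ:ℝ))⁻¹ := by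
          apply Finset.sum_le_sum_of_subset_of_nonneg hsub
          intro μ hμ _
          rw [Finset.mem_Icc] at hμ
          have : (0:ℝ) < (μ:ℝ) := by exact_mod_cast lt_of_lt_of_le zero_lt_one hμ.1
          positivity
        have hharm : ∑ μ ∈ Finset.Icc (1:ℤ) X, ((μ:ℝ))⁻¹ ≤ 1 + Real.log (2*N+1) := by
          have h0 := aux_harm (2*N+1)
          have hXeq : ((2*N+1 : ℕ) : ℤ) = X := by rw [hX]; push_cast; ring
          rw [hXeq] at h0
          have : ((2*N+1 : ℕ) : ℝ) = 2*(N:ℝ)+1 := by push_cast; ring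
          rw [this] at h0
          exact h0
        calc 8*(N:ℝ) * ∑ μ ∈ Finset.Icc (s+1) X, ((μ:ℝ))⁻¹
            ≤ 8*(N:ℝ) * ∑ μ ∈ Finset.Icc (1:ℤ) X, ((μ:ℝ))⁻¹ :=
              mul_le_mul_of_nonneg_left hmono (by positivity)
          _ ≤ 8*N*(1 + Real.log (2*N+1)) :=
              mul_le_mul_of_nonneg_left hharm (by positivity)
      linarith
    have h9 : Real.sqrt 9 = 3 := by
      rw [show (9:ℝ) = 3^2 by norm_num, Real.sqrt_sq (by norm_num)]
    have h8N : Real.sqrt (8*N) ≤ 3*Real.sqrt N := by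
      rw [Real.sqrt_mul (by norm_num)]
      have : Real.sqrt 8 ≤ 3 := by rw [← h9]; exact Real.sqrt_le_sqrt (by norm_num)
      nlinarith [Real.sqrt_nonneg (N:ℝ)]
    have hfin : (2*Real.sqrt N + 1) * (2 + 2*Real.sqrt (8*N)) ≤ 24*(N:ℝ) + 10*Real.sqrt N + 2 := by
      nlinarith [Real.sqrt_nonneg ((8:ℝ)*N), Real.sqrt_nonneg (N:ℝ), hNsq,
        mul_le_mul_of_nonneg_left h8N hsqNn]
    rw [hsplit] at hsum
    linarith [hsum, hsum1, hsum2, hfin, hsqN, hN1]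
  · -- case d ≤ -1 : ellipse, few points
    have hsub : F ⊆ Finset.Icc (-s) s ×ˢ Finset.Icc (0:ℤ) s := by
      intro p hp
      rw [hF, Finset.mem_filter, Finset.mem_product, Finset.mem_Icc, Finset.mem_Icc] at hp
      obtain ⟨⟨hx, hμ⟩, habs⟩ := hp
      rw [abs_le] at habs
      have hx2 : p.1^2 ≤ 4*(N:ℤ) := by nlinarith [sq_nonneg p.2]
      have hμ2 : p.2^2 ≤ 4*(N:ℤ) := by nlinarith [sq_nonneg p.1, sq_nonneg p.2]
      have h1 : |p.1| ≤ s := hs4 _ (abs_nonneg _) (by rwa [sq_abs])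
      have h2 : p.2 ≤ s := hs4 _ hμ.1 hμ2
      rw [Finset.mem_product, Finset.mem_Icc, Finset.mem_Icc]
      rw [abs_le] at h1
      exact ⟨⟨h1.1, h1.2⟩, hμ.1, h2⟩
    have hcard := Finset.card_le_card hsub
    rw [Finset.card_product, Int.card_Icc, Int.card_Icc] at hcard
    have hcard2 : (F.card : ℤ) ≤ (2*s+1) * (s+1) := by
      have h1 : (((s + 1 - -s).toNat : ℤ)) = 2*s+1 := by omega
      have h2 : (((s + 1 - 0).toNat : ℤ)) = s+1 := by omega
      have h3 : (F.card : ℤ) ≤ (((s + 1 - -s).toNat * (s + 1 - 0).toNat : ℕ) : ℤ) := by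
        exact_mod_cast hcard
      push_cast at h3
      rw [h1, h2] at h3
      exact h3
    have hcardR : (F.card : ℝ) ≤ (2*(s:ℝ)+1) * ((s:ℝ)+1) := by exact_mod_cast hcard2
    have hs0R : (0:ℝ) ≤ (s:ℝ) := by exact_mod_cast hs0
    have hs2R : ((s:ℝ))^2 ≤ 4*N := by exact_mod_cast hs2
    have hNsq : Real.sqrt N * Real.sqrt N = N := Real.mul_self_sqrt hNpos.le
    have h15 : (2*(s:ℝ)+1) * ((s:ℝ)+1) ≤ 15*N := by nlinarith
    nlinarith



theorem stmt_8 (ε : ℝ) (hε : 0 < ε) :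
    ∃ C : ℝ, 0 < C ∧ ∀ D : ℤ, ¬ IsSquare D → ∀ N : ℕ, 1 ≤ N →
      (Nat.card {q : ℤ × ℤ // |q.1| ≤ (N : ℤ) ∧ |q.2| ≤ (N : ℤ) ∧
          ∃ r : ℚ, ((D * ((q.1 + q.2 - 1) ^ 2 - 4 * q.1 * q.2)) : ℚ) = r ^ 2} : ℝ) ≤
        C * (|D| : ℝ) ^ ε * (N : ℝ) ^ ((1 : ℝ) + ε) := by
  refine ⟨66 + 8/ε, by positivity, ?_⟩
  intro D hD N hN
  obtain ⟨d, e, hdsf, hdns, hDde⟩ := aux_decomp D hD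
  have hD0 : D ≠ 0 := fun h => hD (h ▸ ⟨0, by ring⟩)
  have he0 : e ≠ 0 := fun h => hD0 (by rw [hDde, h]; ring)
  have hd01 : 2 ≤ d ∨ d ≤ -1 := by
    have h0 : d ≠ 0 := hdsf.ne_zero
    have h1 : d ≠ 1 := fun h => hdns (h ▸ ⟨1, by ring⟩)
    omega
  have hN1R : (1:ℝ) ≤ N := by exact_mod_cast hN
  have hNpos : (0:ℝ) < N := by linarith
  set X : ℤ := 2*(N:ℤ)+1 with hX
  set F : Finset (ℤ×ℤ) := (Finset.Icc (-X) X ×ˢ Finset.Icc (0:ℤ) X).filter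
      (fun p => |p.1^2 - d*p.2^2| ≤ 4*(N:ℤ)) with hF
  have hmW : ∀ q : {q : ℤ × ℤ // |q.1| ≤ (N : ℤ) ∧ |q.2| ≤ (N : ℤ) ∧
      ∃ r : ℚ, ((D * ((q.1 + q.2 - 1) ^ 2 - 4 * q.1 * q.2)) : ℚ) = r ^ 2},
      ∃ m : ℤ, 0 ≤ m ∧ (q.val.2 - q.val.1 - 1)^2 - 4*q.val.1 = d * m^2 := by
    rintro ⟨⟨A,B⟩, hA, hB, r, hr⟩
    have hk : ((D * ((A + B - 1)^2 - 4*A*B) : ℤ) : ℚ) = r^2 := by push_cast; push_cast at hr; linarith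
    obtain ⟨s₀, hs₀⟩ := aux_rat_sq hk
    obtain ⟨m, hm0, hmk⟩ := aux_extract hdsf he0 hDde hs₀
    refine ⟨m, hm0, ?_⟩
    have hre : (B - A - 1)^2 - 4*A = (A + B - 1)^2 - 4*A*B := by ring
    rw [hre, hmk]
  have hfmem : ∀ q, (q.val.2 - q.val.1 - 1, (hmW q).choose) ∈ F := by
    intro q
    obtain ⟨hA, hB, -⟩ := q.prop
    obtain ⟨hm0, hmk⟩ := (hmW q).choose_spec
    set A := q.val.1 with hAdef
    set B := q.val.2 with hBdef
    set m := (hmW q).choose with hmdef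
    rw [abs_le] at hA hB
    have hd1 : 1 ≤ |d| := Int.one_le_abs hdsf.ne_zero
    have hsq : (B - A - 1)^2 ≤ (2*(N:ℤ)+1)^2 := sq_le_sq' (by omega) (by omega)
    have h3 : |d * m^2| ≤ (B-A-1)^2 + 4*N := by
      rw [← hmk, abs_le]
      constructor <;> nlinarith [sq_nonneg (B-A-1)]
    have h2 : m^2 ≤ (2*(N:ℤ)+1)^2 + 4*N := by
      have hmm : m^2 ≤ |d| * m^2 := le_mul_of_one_le_left (sq_nonneg m) hd1
      have : |d| * m^2 = |d * m^2| := by rw [abs_mul, abs_of_nonneg (sq_nonneg m)]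
      nlinarith
    have hmX : m ≤ 2*(N:ℤ)+1 := by nlinarith
    rw [hF, Finset.mem_filter, Finset.mem_product, Finset.mem_Icc, Finset.mem_Icc]
    refine ⟨⟨⟨by omega, by omega⟩, hm0, hmX⟩, ?_⟩
    have h4 : (B - A - 1)^2 - d*m^2 = 4*A := by linarith
    rw [h4, abs_le]
    omega
  have hinj : Function.Injective
      (fun q => (⟨(q.val.2 - q.val.1 - 1, (hmW q).choose), hfmem q⟩ : {p // p ∈ F})) := by
    intro q q' h
    have hv := congrArg Subtype.val h
    have h1 : q.val.2 - q.val.1 - 1 = q'.val.2 - q'.val.1 - 1 := congrArg Prod.fst hv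
    have h2 : (hmW q).choose = (hmW q').choose := congrArg Prod.snd hv
    obtain ⟨-, hmk⟩ := (hmW q).choose_spec
    obtain ⟨-, hmk'⟩ := (hmW q').choose_spec
    have h2sq : d * (hmW q).choose^2 = d * (hmW q').choose^2 := by rw [h2]
    have h1sq : (q.val.2 - q.val.1 - 1)^2 = (q'.val.2 - q'.val.1 - 1)^2 := by rw [h1]
    have hAeq : q.val.1 = q'.val.1 := by linarith [hmk, hmk']
    have hBeq : q.val.2 = q'.val.2 := by omega
    exact Subtype.ext (Prod.ext hAeq hBeq)
  have hcount : (Nat.card {q : ℤ × ℤ // |q.1| ≤ (N : ℤ) ∧ |q.2| ≤ (N : ℤ) ∧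
      ∃ r : ℚ, ((D * ((q.1 + q.2 - 1) ^ 2 - 4 * q.1 * q.2)) : ℚ) = r ^ 2}) ≤ F.card := by
    have := Nat.card_le_card_of_injective _ hinj
    rwa [Nat.card_eq_finsetCard] at this
  have hFb := aux_Fcard d hd01 N hN
  rw [← hF] at hFb
  have hcR : (Nat.card {q : ℤ × ℤ // |q.1| ≤ (N : ℤ) ∧ |q.2| ≤ (N : ℤ) ∧
      ∃ r : ℚ, ((D * ((q.1 + q.2 - 1) ^ 2 - 4 * q.1 * q.2)) : ℚ) = r ^ 2} : ℝ) ≤ (F.card : ℝ) := by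
    exact_mod_cast hcount
  -- log estimates
  have hlog3 : Real.log 3 ≤ 2 := by
    rw [Real.log_le_iff_le_exp (by norm_num)]
    linarith [Real.add_one_le_exp (2:ℝ)]
  have hlog1 : Real.log (2*(N:ℝ)+1) ≤ 2 + Real.log N := by
    have h1 : Real.log (2*(N:ℝ)+1) ≤ Real.log (3*N) :=
      Real.log_le_log (by linarith) (by linarith)
    rw [Real.log_mul (by norm_num) (by linarith)] at h1
    linarith
  have hlog2 : Real.log N ≤ (N:ℝ)^ε / ε := Real.log_le_rpow_div (Nat.cast_nonneg N) hε
  have hNe : (N:ℝ) * (N:ℝ)^ε = (N:ℝ)^((1:ℝ)+ε) := by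
    rw [Real.rpow_add hNpos, Real.rpow_one]
  have hN1e : (N:ℝ) ≤ (N:ℝ)^((1:ℝ)+ε) := by
    calc (N:ℝ) = (N:ℝ)^(1:ℝ) := (Real.rpow_one _).symm
      _ ≤ (N:ℝ)^((1:ℝ)+ε) := Real.rpow_le_rpow_of_exponent_le hN1R (by linarith)
  have hDa : (1:ℝ) ≤ (|D| : ℝ) := by exact_mod_cast Int.one_le_abs hD0
  have hDe : (1:ℝ) ≤ (|D| : ℝ) ^ ε := Real.one_le_rpow hDa hε.le
  have hNpe : (0:ℝ) < (N:ℝ)^((1:ℝ)+ε) := Real.rpow_pos_of_pos hNpos _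
  have hεpos : (0:ℝ) < 8/ε := by positivity
  calc (Nat.card {q : ℤ × ℤ // |q.1| ≤ (N : ℤ) ∧ |q.2| ≤ (N : ℤ) ∧
      ∃ r : ℚ, ((D * ((q.1 + q.2 - 1) ^ 2 - 4 * q.1 * q.2)) : ℚ) = r ^ 2} : ℝ)
      ≤ (F.card : ℝ) := hcR
    _ ≤ 50*N + 8*N*Real.log (2*N+1) := hFb
    _ ≤ 50*N + 8*N*(2 + (N:ℝ)^ε/ε) := by nlinarith
    _ = 66*N + (8/ε)*((N:ℝ) * (N:ℝ)^ε) := by field_simp; ring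
    _ = 66*N + (8/ε)*(N:ℝ)^((1:ℝ)+ε) := by rw [hNe]
    _ ≤ 66*(N:ℝ)^((1:ℝ)+ε) + (8/ε)*(N:ℝ)^((1:ℝ)+ε) := by nlinarith
    _ = (66 + 8/ε) * (N:ℝ)^((1:ℝ)+ε) := by ring
    _ ≤ (66 + 8/ε) * (|D| : ℝ) ^ ε * (N : ℝ) ^ ((1 : ℝ) + ε) := by
        have hkey : 0 ≤ (66 + 8/ε) * (((|D| : ℝ) ^ ε) - 1) * ((N : ℝ) ^ ((1 : ℝ) + ε)) :=
          mul_nonneg (mul_nonneg (by positivity) (by linarith)) hNpe.le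
        nlinarith [hkey]
end

section
/- Let D be a positive squarefree integer with 3 | D, and let A, B be integers with A ≡ −D (mod 9) and B ≡ 0 (mod 9). Then: (1) there exists a nonzero t ∈ ℚ_3⁵ with Q1(t) = Q2(t) = 0, i.e., S^(D;A,B)(ℚ_3) ≠ ∅; and (2) for every nonzero t ∈ ℚ_3⁵ with Q1(t) = Q2(t) = 0 and all u ∈ {t0, t1}, v ∈ {t0 + A·t1, t0 + B·t1} with u·v ≠ 0, there exist x, y ∈ ℚ_3 with u·v = x² − D·y² (i.e., the Brauer class α evaluates constantly to 0 on S^(D;A,B)(ℚ_3)). -/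
set_option maxHeartbeats 2000000


local notation "O" => ℤ_[3]
local notation "K" => ℚ_[3]

lemma norm3O : ‖(3:O)‖ = 3⁻¹ := by
  have : ‖((3:ℕ):O)‖ = ((3:ℕ):ℝ)⁻¹ := PadicInt.norm_p
  push_cast at this; exact this

lemma norm3K : ‖(3:K)‖ = 3⁻¹ := by
  have : ‖((3:ℕ):K)‖ = ((3:ℕ):ℝ)⁻¹ := Padic.norm_p
  push_cast at this; exact this

lemma O_norm_le_third {x : O} (h : ‖x‖ < 1) : ‖x‖ ≤ 3⁻¹ := by
  obtain ⟨y, hy⟩ := (PadicInt.norm_lt_one_iff_dvd x).1 h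
  have h3 : ((3:ℕ):O) = (3:O) := by norm_num
  rw [h3] at hy
  rw [hy, norm_mul, norm3O]
  have := PadicInt.norm_le_one y
  nlinarith [norm_nonneg y]

lemma K_norm_le_third {x : K} (h : ‖x‖ < 1) : ‖x‖ ≤ 3⁻¹ := by
  rcases eq_or_ne x 0 with rfl | hx
  · simp
  · rw [Padic.norm_eq_zpow_neg_valuation hx] at h ⊢
    have h3 : (1:ℝ) < ((3:ℕ):ℝ) := by norm_num
    have : ((3:ℕ):ℝ) ^ (-x.valuation) < ((3:ℕ):ℝ)^(0:ℤ) := by simpa using h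
    have hv : -x.valuation < 0 := (zpow_lt_zpow_iff_right₀ h3).1 this
    calc ((3:ℕ):ℝ) ^ (-x.valuation) ≤ ((3:ℕ):ℝ)^(-1:ℤ) := by
          apply zpow_le_zpow_right₀ (le_of_lt h3) (by omega)
      _ = 3⁻¹ := by norm_num

lemma coe_norm (z : O) : ‖(z:K)‖ = ‖z‖ := PadicInt.padic_norm_e_of_padicInt z

lemma nsub_le_max (a b : K) : ‖a - b‖ ≤ max ‖a‖ ‖b‖ := by
  rw [sub_eq_add_neg]
  simpa using Padic.nonarchimedean a (-b)

lemma two_normO : ‖(2:O)‖ = 1 := by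
  have h1 : ‖(2:O)‖ ≤ 1 := PadicInt.norm_le_one _
  have h2 : ¬ ‖((2:ℤ):O)‖ < 1 := by
    rw [PadicInt.norm_int_lt_one_iff_dvd]; norm_num
  push_cast at h2
  linarith [lt_or_eq_of_le h1]

lemma sq_of_close_one {w : O} (h : ‖w - 1‖ < 1) : ∃ z : O, z^2 = w ∧ ‖z - 1‖ < 1 := by
  set F : Polynomial O := Polynomial.X^2 - Polynomial.C w with hF
  have hd : F.derivative = Polynomial.C 2 * Polynomial.X := by simp [hF, one_add_one_eq_two]
  have he1 : F.eval 1 = 1 - w := by simp [hF]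
  have hde : F.derivative.eval 1 = 2 := by simp [hd]
  have hnorm : ‖F.eval 1‖ < ‖F.derivative.eval 1‖^2 := by
    rw [he1, hde, two_normO]
    rw [norm_sub_rev] at h
    simpa using h
  obtain ⟨z, hz, hz1, -⟩ := hensels_lemma hnorm
  refine ⟨z, ?_, by simpa [hde, two_normO] using hz1⟩
  have h0 : z^2 - w = 0 := by simpa [hF] using hz
  linear_combination h0

lemma sqK {w : K} (h : ‖w - 1‖ < 1) : ∃ z : K, z^2 = w ∧ ‖z - 1‖ < 1 := by
  have hw1 : ‖w‖ ≤ 1 := by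
    have h2 := Padic.nonarchimedean (w - 1) 1
    simp only [sub_add_cancel] at h2
    calc ‖w‖ ≤ max ‖w-1‖ ‖(1:K)‖ := h2
      _ ≤ 1 := by rw [norm_one]; exact max_le (le_of_lt h) le_rfl
  set W : O := ⟨w, hw1⟩ with hW
  have hWn : ‖W - 1‖ < 1 := by
    have : ((W - 1 : O) : K) = w - 1 := by rw [PadicInt.coe_sub, PadicInt.coe_one]
    rw [← coe_norm, this]; exact h
  obtain ⟨z, hz, hz1⟩ := sq_of_close_one hWn
  refine ⟨(z:K), ?_, ?_⟩
  · have : ((z^2 : O) : K) = ((W : O) : K) := by exact_mod_cast congrArg _ hz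
    push_cast at this
    simpa [hW] using this
  · have : ((z - 1 : O) : K) = (z:K) - 1 := by push_cast; ring
    rw [← this, coe_norm]; exact hz1

lemma norm_int_K {n : ℤ} (h : ¬ (3:ℤ) ∣ n) : ‖(n:K)‖ = 1 := by
  have h1 : ‖(n:K)‖ ≤ 1 := Padic.norm_int_le_one n
  have h2 : ¬ ‖(n:K)‖ < 1 := by
    rw [Padic.norm_intCast_lt_one_iff]
    simpa using h
  linarith [lt_or_eq_of_le h1]

lemma norm_int_O {n : ℤ} (h : ¬ (3:ℤ) ∣ n) : ‖((n:ℤ):O)‖ = 1 := by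
  have h1 : ‖((n:ℤ):O)‖ ≤ 1 := PadicInt.norm_le_one _
  have h2 : ¬ ‖((n:ℤ):O)‖ < 1 := by
    rw [PadicInt.norm_int_lt_one_iff_dvd]
    simpa using h
  linarith [lt_or_eq_of_le h1]

lemma phi_zero_iff (x : O) : PadicInt.toZMod x = 0 ↔ ‖x‖ < 1 := by
  have h1 : PadicInt.toZMod x = 0 ↔ x ∈ RingHom.ker (PadicInt.toZMod (p := 3)) :=
    RingHom.mem_ker.symm
  rw [h1, PadicInt.ker_toZMod, PadicInt.maximalIdeal_eq_span_p, Ideal.mem_span_singleton,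
    ← PadicInt.norm_lt_one_iff_dvd]



def Nm (D : ℤ) (q : K) : Prop := ∃ x y : K, q = x ^ 2 - (D:K) * y ^ 2

lemma nm_mul {D : ℤ} {a b : K} (ha : Nm D a) (hb : Nm D b) : Nm D (a*b) := by
  obtain ⟨x,y,rfl⟩ := ha; obtain ⟨z,w,rfl⟩ := hb
  exact ⟨x*z + D*y*w, x*w + y*z, by ring⟩

lemma nm_mul_sq {D : ℤ} {a : K} (s : K) (ha : Nm D a) : Nm D (a * s^2) := by
  obtain ⟨x,y,rfl⟩ := ha
  exact ⟨x*s, y*s, by ring⟩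

lemma nm_inv {D : ℤ} {a : K} (h : a ≠ 0) (ha : Nm D a) : Nm D a⁻¹ := by
  have he : a⁻¹ = a * (a⁻¹)^2 := by field_simp
  rw [he]; exact nm_mul_sq _ ha


lemma key (D A B m a₁ b₁ : ℤ) (hDm : D = 3*m) (hm : ¬(3:ℤ)∣m)
    (hAa : A = 3*a₁) (ham : (3:ℤ) ∣ (a₁+m)) (hBb : B = 9*b₁)
    (s : O) (hs2 : ((A:ℤ):O) = -((D:ℤ):O)*s^2)
    (t0 t1 t2 t3 t4 : K)
    (n0 : ‖t0‖ ≤ 1) (n1 : ‖t1‖ ≤ 1) (n2 : ‖t2‖ ≤ 1) (n3 : ‖t3‖ ≤ 1) (n4 : ‖t4‖ ≤ 1)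
    (hmax : ‖t0‖ = 1 ∨ ‖t1‖ = 1 ∨ ‖t2‖ = 1 ∨ ‖t3‖ = 1 ∨ ‖t4‖ = 1)
    (e1 : t2^2 - (D:K)*t3^2 - t0*t1 = 0)
    (e2 : t2^2 - (D:K)*t4^2 - (t0 + (A:K)*t1)*(t0+(B:K)*t1) = 0)
    (h0 : t0 ≠ 0) (hv1 : t0 + (A:K)*t1 ≠ 0) :
    Nm D (t0*(t0+(A:K)*t1)) := by
  have hma : ¬ (3:ℤ) ∣ a₁ := by intro h; exact hm (by omega)
  have normD : ‖(D:K)‖ = 3⁻¹ := by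
    rw [hDm]; push_cast; rw [norm_mul, norm3K, norm_int_K hm]; ring
  have normA : ‖(A:K)‖ = 3⁻¹ := by
    rw [hAa]; push_cast; rw [norm_mul, norm3K, norm_int_K hma]; ring
  have normB : ‖(B:K)‖ ≤ (3:ℝ)⁻¹ * 3⁻¹ := by
    rw [hBb]; push_cast
    rw [show ((9:K))*(b₁:K) = (3:K)*((3:K)*(b₁:K)) by ring]
    rw [norm_mul, norm_mul, norm3K]
    have := Padic.norm_int_le_one (p := 3) b₁
    nlinarith [norm_nonneg ((b₁:ℤ):K)]
  by_cases h01 : ‖t0‖ = 1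
  · -- t0 is a unit : q1 = t0^2 * (1 + A t1/t0), square
    have hfrac : ‖(A:K)*t1/t0‖ ≤ 3⁻¹ := by
      rw [norm_div, norm_mul, normA, h01]
      nlinarith [norm_nonneg t1]
    obtain ⟨z, hz, -⟩ := sqK (w := 1 + (A:K)*t1/t0) (by
      rw [show 1 + (A:K)*t1/t0 - 1 = (A:K)*t1/t0 by ring]
      calc ‖(A:K)*t1/t0‖ ≤ 3⁻¹ := hfrac
        _ < 1 := by norm_num)
    refine ⟨t0*z, 0, ?_⟩
    have he : t0*(t0+(A:K)*t1) = t0^2*(1 + (A:K)*t1/t0) := by field_simp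
    rw [he, ← hz]; ring
  · -- ‖t0‖ < 1
    have ht0 : ‖t0‖ ≤ 3⁻¹ := K_norm_le_third (lt_of_le_of_ne n0 h01)
    have ht2 : ‖t2‖ ≤ 3⁻¹ := by
      apply K_norm_le_third
      have e : t2^2 = (D:K)*t3^2 + t0*t1 := by linear_combination e1
      have h2 : ‖t2‖^2 ≤ 3⁻¹ := by
        rw [← norm_pow, e]
        refine le_trans (Padic.nonarchimedean _ _) (max_le ?_ ?_)
        · rw [norm_mul, normD, norm_pow]; nlinarith [norm_nonneg t3]
        · rw [norm_mul]; nlinarith [norm_nonneg t1, norm_nonneg t0]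
      nlinarith [norm_nonneg t2]
    have ht1 : ‖t1‖ = 1 := by
      by_contra h1'
      have ht1' : ‖t1‖ ≤ 3⁻¹ := K_norm_le_third (lt_of_le_of_ne n1 h1')
      have ht3 : ‖t3‖ < 1 := by
        have e : (D:K)*t3^2 = t2^2 - t0*t1 := by linear_combination -e1
        have h2 : ‖(D:K)*t3^2‖ ≤ 3⁻¹*3⁻¹ := by
          rw [e]
          refine le_trans (nsub_le_max _ _) (max_le ?_ ?_)
          · rw [norm_pow]; nlinarith [norm_nonneg t2]
          · rw [norm_mul]; nlinarith [norm_nonneg t0, norm_nonneg t1]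
        rw [norm_mul, normD, norm_pow] at h2
        nlinarith [norm_nonneg t3]
      have hv1n : ‖t0 + (A:K)*t1‖ ≤ 3⁻¹ := by
        refine le_trans (Padic.nonarchimedean _ _) (max_le ht0 ?_)
        rw [norm_mul, normA]; nlinarith [norm_nonneg t1]
      have hv2n : ‖t0 + (B:K)*t1‖ ≤ 3⁻¹ := by
        refine le_trans (Padic.nonarchimedean _ _) (max_le ht0 ?_)
        rw [norm_mul]; nlinarith [norm_nonneg t1, norm_nonneg ((B:ℤ):K)]
      have ht4 : ‖t4‖ < 1 := by
        have e : (D:K)*t4^2 = t2^2 - (t0 + (A:K)*t1)*(t0+(B:K)*t1) := by linear_combination -e2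
        have h2 : ‖(D:K)*t4^2‖ ≤ 3⁻¹*3⁻¹ := by
          rw [e]
          refine le_trans (nsub_le_max _ _) (max_le ?_ ?_)
          · rw [norm_pow]; nlinarith [norm_nonneg t2]
          · rw [norm_mul]
            nlinarith [norm_nonneg (t0 + (A:K)*t1), norm_nonneg (t0+(B:K)*t1)]
        rw [norm_mul, normD, norm_pow] at h2
        nlinarith [norm_nonneg t4]
      rcases hmax with h|h|h|h|h
      · exact h01 h
      · exact h1' h
      · rw [h] at ht2; norm_num at ht2
      · rw [h] at ht3; norm_num at ht3
      · rw [h] at ht4; norm_num at ht4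
    -- lift everything to O
    set T0 : O := ⟨t0, n0⟩ with hT0d
    set T1 : O := ⟨t1, n1⟩ with hT1d
    set T2 : O := ⟨t2, n2⟩ with hT2d
    set T3 : O := ⟨t3, n3⟩ with hT3d
    set T4 : O := ⟨t4, n4⟩ with hT4d
    have cT0 : (T0:K) = t0 := rfl
    have cT1 : (T1:K) = t1 := rfl
    have cT2 : (T2:K) = t2 := rfl
    have cT3 : (T3:K) = t3 := rfl
    have cT4 : (T4:K) = t4 := rfl
    have e1O : T2^2 - ((D:ℤ):O)*T3^2 - T0*T1 = 0 := by
      apply Subtype.coe_injective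
      push_cast [cT0, cT1, cT2, cT3]
      exact e1
    have e2O : T2^2 - ((D:ℤ):O)*T4^2 - (T0 + ((A:ℤ):O)*T1)*(T0+((B:ℤ):O)*T1) = 0 := by
      apply Subtype.coe_injective
      push_cast [cT0, cT1, cT2, cT4]
      exact e2
    have hT1norm : ‖T1‖ = 1 := by rw [← coe_norm, cT1]; exact ht1
    have hT1u : IsUnit T1 := PadicInt.isUnit_iff.2 hT1norm
    obtain ⟨u1, hu1⟩ := hT1u.exists_right_inv
    have hT1ne : T1 ≠ 0 := hT1u.ne_zero
    have hu1n : ‖u1‖ = 1 := by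
      have h : ‖T1 * u1‖ = 1 := by rw [hu1]; exact norm_one
      rw [norm_mul, hT1norm, one_mul] at h
      exact h
    set r : O := T0*u1 with hrd
    set a : O := T2*u1 with had
    set c : O := T3*u1 with hcd
    set e : O := T4*u1 with hed
    have hT0r : T0 = r*T1 := by rw [hrd]; linear_combination (-T0)*hu1
    have hrn : ‖r‖ ≤ 3⁻¹ := by
      rw [hrd, norm_mul, hu1n, mul_one, ← coe_norm, cT0]; exact ht0
    have han : ‖a‖ ≤ 3⁻¹ := by
      rw [had, norm_mul, hu1n, mul_one, ← coe_norm, cT2]; exact ht2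
    have hDO : ((D:ℤ):O) = 3*((m:ℤ):O) := by rw [hDm]; push_cast; ring
    have hAO : ((A:ℤ):O) = 3*((a₁:ℤ):O) := by rw [hAa]; push_cast; ring
    have hBO : ((B:ℤ):O) = 9*((b₁:ℤ):O) := by rw [hBb]; push_cast; ring
    have E1 : a^2 - ((D:ℤ):O)*c^2 = r := by
      calc a^2 - ((D:ℤ):O)*c^2 = (T2^2 - ((D:ℤ):O)*T3^2)*u1^2 := by
            rw [had, hcd]; ring
        _ = (T0*T1)*u1^2 := by rw [show T2^2 - ((D:ℤ):O)*T3^2 = T0*T1 by linear_combination e1O]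
        _ = (T0*u1)*(T1*u1) := by ring
        _ = r := by rw [hu1, ← hrd]; ring
    have hv1O : (T0 + ((A:ℤ):O)*T1)*u1 = r + ((A:ℤ):O) := by
      rw [hrd]; linear_combination ((A:ℤ):O)*hu1
    have hv2O : (T0 + ((B:ℤ):O)*T1)*u1 = r + ((B:ℤ):O) := by
      rw [hrd]; linear_combination ((B:ℤ):O)*hu1
    have E2 : (r + ((A:ℤ):O))*(r + ((B:ℤ):O)) = a^2 - ((D:ℤ):O)*e^2 := by
      calc (r + ((A:ℤ):O))*(r + ((B:ℤ):O))
          = ((T0 + ((A:ℤ):O)*T1)*u1)*((T0 + ((B:ℤ):O)*T1)*u1) := by rw [hv1O, hv2O]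
        _ = ((T0 + ((A:ℤ):O)*T1)*(T0+((B:ℤ):O)*T1))*u1^2 := by ring
        _ = (T2^2 - ((D:ℤ):O)*T4^2)*u1^2 := by
            rw [show T2^2 - ((D:ℤ):O)*T4^2 = (T0 + ((A:ℤ):O)*T1)*(T0+((B:ℤ):O)*T1) by
              linear_combination e2O]
        _ = a^2 - ((D:ℤ):O)*e^2 := by rw [had, hed]; ring
    obtain ⟨a₀, ha₀⟩ : (3:O) ∣ a := by
      have : ‖a‖ < 1 := lt_of_le_of_lt han (by norm_num)
      have h3 := (PadicInt.norm_lt_one_iff_dvd a).1 this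
      exact_mod_cast h3
    by_cases hcn : ‖c‖ = 1
    · -- contradiction case
      exfalso
      have hφc : PadicInt.toZMod c ≠ 0 := by
        rw [Ne, phi_zero_iff, hcn]; norm_num
      set w₁ : O := 3*a₀^2 - ((m:ℤ):O)*c^2 with hw₁d
      have hrw : r = 3*w₁ := by
        rw [← E1, ha₀, hDO, hw₁d]; ring
      have h3ne : (3:O) ≠ 0 := by
        intro h
        have h2 : ‖(3:O)‖ = 0 := by rw [h]; exact norm_zero
        rw [norm3O] at h2; norm_num at h2
      have step1 : 3*((w₁+((a₁:ℤ):O))*(w₁+3*((b₁:ℤ):O))) = 3*a₀^2 - ((m:ℤ):O)*e^2 := by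
        apply mul_left_cancel₀ h3ne
        calc (3:O)*(3*((w₁+((a₁:ℤ):O))*(w₁+3*((b₁:ℤ):O))))
            = (3*w₁+3*((a₁:ℤ):O))*(3*w₁+9*((b₁:ℤ):O)) := by ring
          _ = (r + ((A:ℤ):O))*(r + ((B:ℤ):O)) := by rw [← hrw, ← hAO, ← hBO]
          _ = a^2 - ((D:ℤ):O)*e^2 := E2
          _ = 3*(3*a₀^2 - ((m:ℤ):O)*e^2) := by rw [ha₀, hDO]; ring
      have hφ3 : PadicInt.toZMod (3:O) = 0 := by
        rw [show (3:O) = ((3:ℤ):O) by push_cast; ring, map_intCast]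
        decide
      have hφm : PadicInt.toZMod ((m:ℤ):O) ≠ 0 := by
        rw [map_intCast]
        simpa using (ZMod.intCast_zmod_eq_zero_iff_dvd m 3).not.2 (by simpa using hm)
      have hφe : PadicInt.toZMod e = 0 := by
        have h := congrArg (PadicInt.toZMod) step1
        simp only [map_mul, map_add, map_sub, map_pow, hφ3, zero_mul, mul_zero, zero_sub] at h
        have h2 : PadicInt.toZMod ((m:ℤ):O) * (PadicInt.toZMod e)^2 = 0 := by
          linear_combination h
        rcases mul_eq_zero.1 h2 with h3 | h3
        · exact absurd h3 hφm
        · exact (pow_eq_zero_iff (by norm_num)).1 h3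
      obtain ⟨e₀, he₀⟩ : (3:O) ∣ e := by
        have := (phi_zero_iff e).1 hφe
        have h3 := (PadicInt.norm_lt_one_iff_dvd e).1 this
        exact_mod_cast h3
      have step2 : (w₁+((a₁:ℤ):O))*(w₁+3*((b₁:ℤ):O)) = a₀^2 - 3*((m:ℤ):O)*e₀^2 := by
        apply mul_left_cancel₀ h3ne
        rw [step1, he₀]; ring
      have hφa₁ : PadicInt.toZMod ((a₁:ℤ):O) = - PadicInt.toZMod ((m:ℤ):O) := by
        have h4 : PadicInt.toZMod (((a₁+m:ℤ)):O) = 0 := by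
          rw [map_intCast]
          exact (ZMod.intCast_zmod_eq_zero_iff_dvd _ 3).2 (by simpa using ham)
        rw [show (((a₁+m:ℤ)):O) = ((a₁:ℤ):O) + ((m:ℤ):O) by push_cast; ring, map_add] at h4
        linear_combination h4
      have hφw₁ : PadicInt.toZMod w₁ = - PadicInt.toZMod ((m:ℤ):O) * (PadicInt.toZMod c)^2 := by
        rw [hw₁d]
        simp only [map_mul, map_add, map_sub, map_pow, hφ3]
        ring
      have key3 : ∀ mz cz az : ZMod 3, mz ≠ 0 → cz ≠ 0 →
          ¬ ((-mz*cz^2 + -mz)*(-mz*cz^2) = az^2) := by decide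
      have h := congrArg (PadicInt.toZMod) step2
      simp only [map_mul, map_add, map_sub, map_pow, hφ3, hφa₁, hφw₁, zero_mul, mul_zero,
        add_zero, sub_zero] at h
      refine key3 (PadicInt.toZMod ((m:ℤ):O)) (PadicInt.toZMod c) (PadicInt.toZMod a₀)
        hφm hφc ?_
      linear_combination h
    · -- good case
      have hcl : ‖c‖ ≤ 3⁻¹ := by
        apply O_norm_le_third
        rcases lt_or_eq_of_le (PadicInt.norm_le_one c) with h | h
        · exact h
        · exact absurd h hcn
      obtain ⟨c₀, hc₀⟩ : (3:O) ∣ c := by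
        have : ‖c‖ < 1 := lt_of_le_of_lt hcl (by norm_num)
        have h3 := (PadicInt.norm_lt_one_iff_dvd c).1 this
        exact_mod_cast h3
      set ρ : O := a₀^2 - 3*((m:ℤ):O)*c₀^2 with hρd
      have hrρ : r = 9*ρ := by
        rw [← E1, ha₀, hc₀, hDO, hρd]; ring
      have ha₁u : IsUnit ((a₁:ℤ):O) := PadicInt.isUnit_iff.2 (norm_int_O hma)
      obtain ⟨j, hj⟩ := ha₁u.exists_right_inv
      have hjn : ‖j‖ ≤ 1 := PadicInt.norm_le_one j
      obtain ⟨z, hz, -⟩ := sq_of_close_one (w := 1 + 3*(ρ*j)) (by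
        rw [show (1:O) + 3*(ρ*j) - 1 = 3*(ρ*j) by ring]
        rw [norm_mul, norm3O]
        calc (3:ℝ)⁻¹ * ‖ρ*j‖ ≤ 3⁻¹ * 1 := by
              have := PadicInt.norm_le_one (ρ*j)
              nlinarith
          _ < 1 := by norm_num)
      have hrA : r + ((A:ℤ):O) = 3*((a₁:ℤ):O)*z^2 := by
        rw [hz, hAO, hrρ]
        linear_combination (-(9*ρ))*hj
      set X : O := ((D:ℤ):O)*s*c*T1*z with hXd
      set Y : O := s*a*T1*z with hYd
      have EQ : T0*(T0 + ((A:ℤ):O)*T1) = X^2 - ((D:ℤ):O)*Y^2 := by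
        rw [hXd, hYd]
        linear_combination (T0 + r*T1 + ((A:ℤ):O)*T1)*hT0r + (((D:ℤ):O)*s^2*T1^2*z^2)*E1 +
          (r*T1^2)*hrA + (-(r*T1^2*z^2))*hAO + (r*T1^2*z^2)*hs2
      refine ⟨(X:K), (Y:K), ?_⟩
      have hcoe := congrArg (Subtype.val) EQ
      push_cast [cT0, cT1] at hcoe
      convert hcoe using 2 <;> push_cast [cT0, cT1] <;> ring

lemma two_normK : ‖(2:K)‖ = 1 := by
  have h1 : ‖(2:K)‖ ≤ 1 := by
    have := Padic.norm_int_le_one (p := 3) 2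
    simpa using this
  have h2 : ¬ ‖((2:ℤ):K)‖ < 1 := by
    rw [Padic.norm_intCast_lt_one_iff]; norm_num
  push_cast at h2
  linarith [lt_or_eq_of_le h1]

lemma exists_s {D A m a₁ : ℤ} (hDm : D = 3*m) (hm : ¬(3:ℤ)∣m) (hAa : A = 3*a₁)
    (ham : (3:ℤ) ∣ (a₁+m)) :
    ∃ s : O, ((A:ℤ):O) = -((D:ℤ):O)*s^2 := by
  have hmu : IsUnit ((m:ℤ):O) := PadicInt.isUnit_iff.2 (norm_int_O hm)
  obtain ⟨j, hj⟩ := hmu.exists_right_inv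
  have he : (-(((a₁:ℤ):O)) * j) - 1 = -(j*(((a₁:ℤ):O) + ((m:ℤ):O))) := by
    linear_combination hj
  have hσ : ‖(-(((a₁:ℤ):O)) * j) - 1‖ < 1 := by
    rw [he, norm_neg, norm_mul]
    have h1 : ‖((a₁:ℤ):O) + ((m:ℤ):O)‖ < 1 := by
      rw [show ((a₁:ℤ):O) + ((m:ℤ):O) = (((a₁+m:ℤ)):O) by push_cast; ring]
      rw [PadicInt.norm_int_lt_one_iff_dvd]
      exact_mod_cast ham
    have h2 := PadicInt.norm_le_one j
    nlinarith [norm_nonneg j, norm_nonneg (((a₁:ℤ):O) + ((m:ℤ):O))]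
  obtain ⟨s, hs, -⟩ := sq_of_close_one hσ
  refine ⟨s, ?_⟩
  have hDO : ((D:ℤ):O) = 3*((m:ℤ):O) := by rw [hDm]; push_cast; ring
  have hAO : ((A:ℤ):O) = 3*((a₁:ℤ):O) := by rw [hAa]; push_cast; ring
  rw [hAO, hs, hDO]
  linear_combination (-3*((a₁:ℤ):O))*hj

lemma D_nonsquare {D m : ℤ} (hDm : D = 3*m) (hm : ¬(3:ℤ)∣m) :
    ∀ x y : K, x^2 = (D:K)*y^2 → x = 0 ∧ y = 0 := by
  intro x y h
  have hDz : (D:ℤ) ≠ 0 := by omega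
  have hDne : (D:K) ≠ 0 := by exact_mod_cast hDz
  have normD : ‖(D:K)‖ = 3⁻¹ := by
    rw [hDm]; push_cast; rw [norm_mul, norm3K, norm_int_K hm]; ring
  by_cases hy : y = 0
  · subst hy
    refine ⟨?_, rfl⟩
    have hx2 : x^2 = 0 := by rw [h]; ring
    exact pow_eq_zero_iff (n := 2) (by norm_num) |>.1 hx2
  · exfalso
    have hxy : (x/y)^2 = (D:K) := by
      field_simp
      linear_combination h
    have hxyne : x/y ≠ 0 := by
      intro h0
      rw [h0] at hxy
      simp at hxy
      exact hDne hxy.symm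
    have hn : ‖x/y‖^2 = 3⁻¹ := by rw [← norm_pow, hxy, normD]
    rw [Padic.norm_eq_zpow_neg_valuation hxyne] at hn
    have h3 : ((3:ℕ):ℝ)^(-(x/y).valuation * 2) = 3⁻¹ := by
      rw [zpow_mul, show ((2:ℤ)) = ((2:ℕ):ℤ) by norm_num, zpow_natCast]
      exact_mod_cast hn
    have h4 : (-(x/y).valuation * 2) = (-1 : ℤ) := by
      apply zpow_right_injective₀ (a := ((3:ℕ):ℝ)) (by norm_num) (by norm_num)
      show ((3:ℕ):ℝ)^(-(x/y).valuation * 2) = ((3:ℕ):ℝ)^(-1:ℤ)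
      rw [h3]
      norm_num
    omega

lemma neg_one_not_sq : ∀ x : K, x^2 ≠ -1 := by
  intro x h
  have hx1 : ‖x‖ ≤ 1 := by
    have h2 : ‖x‖^2 = 1 := by
      rw [← norm_pow, h]; simp
    nlinarith [norm_nonneg x]
  set X : O := ⟨x, hx1⟩ with hXd
  have hX : X^2 = -1 := by
    apply Subtype.coe_injective
    push_cast
    exact h
  have h3 := congrArg PadicInt.toZMod hX
  simp only [map_pow, map_neg, map_one] at h3
  have h4 : ∀ u : ZMod 3, u^2 ≠ -1 := by decide
  exact h4 _ h3

lemma key_all (D A B m a₁ b₁ : ℤ) (hDm : D = 3*m) (hm : ¬(3:ℤ)∣m)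
    (hAa : A = 3*a₁) (ham : (3:ℤ) ∣ (a₁+m)) (hBb : B = 9*b₁)
    (t0 t1 t2 t3 t4 : K)
    (n0 : ‖t0‖ ≤ 1) (n1 : ‖t1‖ ≤ 1) (n2 : ‖t2‖ ≤ 1) (n3 : ‖t3‖ ≤ 1) (n4 : ‖t4‖ ≤ 1)
    (hmax : ‖t0‖ = 1 ∨ ‖t1‖ = 1 ∨ ‖t2‖ = 1 ∨ ‖t3‖ = 1 ∨ ‖t4‖ = 1)
    (e1 : t2^2 - (D:K)*t3^2 - t0*t1 = 0)
    (e2 : t2^2 - (D:K)*t4^2 - (t0 + (A:K)*t1)*(t0+(B:K)*t1) = 0) :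
    ∀ u v : K, (u = t0 ∨ u = t1) → (v = t0 + (A:K)*t1 ∨ v = t0 + (B:K)*t1) → u*v ≠ 0 →
      Nm D (u*v) := by
  obtain ⟨s, hs2⟩ := exists_s hDm hm hAa ham
  have hsK : ((A:K)) = -(D:K)*(s:K)^2 := by
    have h := congrArg (Subtype.val) hs2
    push_cast at h
    exact h
  have hma : ¬ (3:ℤ) ∣ a₁ := by intro h; exact hm (by omega)
  have hAzi : (A:ℤ) ≠ 0 := by
    intro h; exact hma (by omega)
  have hAne : (A:K) ≠ 0 := by exact_mod_cast hAzi
  have hDne : (D:K) ≠ 0 := by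
    have : (D:ℤ) ≠ 0 := by omega
    exact_mod_cast this
  have hsKne : (s:K) ≠ 0 := by
    intro h
    rw [h] at hsK
    simp at hsK
    exact hAzi hsK
  have nm01 : Nm D (t0*t1) := ⟨t2, t3, by linear_combination -e1⟩
  have nm12 : Nm D ((t0+(A:K)*t1)*(t0+(B:K)*t1)) := ⟨t2, t4, by linear_combination -e2⟩
  intro u v hu hv huv
  have hKEY : t0 ≠ 0 → t0 + (A:K)*t1 ≠ 0 → Nm D (t0*(t0+(A:K)*t1)) :=
    fun h0 hv1 => key D A B m a₁ b₁ hDm hm hAa ham hBb s hs2 t0 t1 t2 t3 t4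
      n0 n1 n2 n3 n4 hmax e1 e2 h0 hv1
  have hV1 : t0 + (A:K)*t1 = 0 → t1 ≠ 0 → False := by
    intro hz h1
    have h24 : t2 = 0 ∧ t4 = 0 := by
      apply D_nonsquare hDm hm
      linear_combination e2 + (t0 + (B:K)*t1)*hz
    obtain ⟨hz2, hz4⟩ := h24
    have ht0 : t0 = -(A:K)*t1 := by linear_combination hz
    have hstep : (D:K)*t3^2 = (D:K)*(-(s:K)^2*t1^2) := by
      linear_combination (-1)*e1 + t2*hz2 + (-t1)*ht0 + t1^2*hsK
    have hcancel : t3^2 = -(s:K)^2*t1^2 := mul_left_cancel₀ hDne hstep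
    have h9 : (t3/((s:K)*t1))^2 = -1 := by
      rw [div_pow, hcancel]
      field_simp
    exact neg_one_not_sq _ h9
  rcases hu with hu0 | hu0 <;> rcases hv with hv0 | hv0 <;> rw [hu0, hv0] at huv ⊢
  · exact hKEY (left_ne_zero_of_mul huv) (right_ne_zero_of_mul huv)
  · have h0 : t0 ≠ 0 := left_ne_zero_of_mul huv
    by_cases hv1 : t0 + (A:K)*t1 = 0
    · exfalso
      apply hV1 hv1
      intro h1
      apply h0
      rw [h1] at hv1
      simpa using hv1
    · have hq1 := hKEY h0 hv1
      have he : t0*(t0+(B:K)*t1) =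
          (((t0+(A:K)*t1)*(t0+(B:K)*t1)) * (t0*(t0+(A:K)*t1))) * ((t0+(A:K)*t1)⁻¹)^2 := by
        have hv1' : t0 + t1*(A:K) ≠ 0 := by rwa [mul_comm t1]
        field_simp
      rw [he]
      exact nm_mul_sq _ (nm_mul nm12 hq1)
  · have h1 : t1 ≠ 0 := left_ne_zero_of_mul huv
    by_cases h0 : t0 = 0
    · exact ⟨0, (s:K)*t1, by linear_combination t1*h0 + t1^2*hsK⟩
    · have hv1 : t0 + (A:K)*t1 ≠ 0 := right_ne_zero_of_mul huv
      have hq1 := hKEY h0 hv1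
      have he : t1*(t0+(A:K)*t1) = ((t0*t1) * (t0*(t0+(A:K)*t1))) * (t0⁻¹)^2 := by
        field_simp
      rw [he]
      exact nm_mul_sq _ (nm_mul nm01 hq1)
  · have h1 : t1 ≠ 0 := left_ne_zero_of_mul huv
    by_cases h0 : t0 = 0
    · have h23 : t2 = 0 ∧ t3 = 0 := by
        apply D_nonsquare hDm hm
        linear_combination e1 + t1*h0
      obtain ⟨hz2, hz3⟩ := h23
      have hAB : (A:K)*(t1*(t0+(B:K)*t1)) = -(D:K)*t4^2 := by
        linear_combination -e2 + t2*hz2 - (t0+(B:K)*t1)*h0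
      have hBt : t1*(t0+(B:K)*t1) = ((-(D:K)*t4^2) * (A:K)) * (((A:K))⁻¹)^2 := by
        rw [← hAB]
        field_simp
      rw [hBt]
      have nmt4 : Nm D (-(D:K)*t4^2) := ⟨0, t4, by ring⟩
      have nmA : Nm D ((A:K)) := ⟨0, (s:K), by linear_combination hsK⟩
      exact nm_mul_sq _ (nm_mul nmt4 nmA)
    · by_cases hv1 : t0 + (A:K)*t1 = 0
      · exact absurd (hV1 hv1 h1) (by simp)
      · have hq1 := hKEY h0 hv1
        have hq1ne : t0*(t0+(A:K)*t1) ≠ 0 := mul_ne_zero h0 hv1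
        have he : t1*(t0+(B:K)*t1) =
            ((t0*t1) * ((t0+(A:K)*t1)*(t0+(B:K)*t1))) * (t0*(t0+(A:K)*t1))⁻¹ := by
          have hv1' : t0 + t1*(A:K) ≠ 0 := by rwa [mul_comm t1]
          field_simp
        rw [he]
        exact nm_mul (nm_mul nm01 nm12) (nm_inv hq1ne hq1)

theorem stmt_19 (D : ℤ) (hD : 0 < D) (hsf : Squarefree D) (h3D : (3 : ℤ) ∣ D)
    (A B : ℤ) (hA : A ≡ -D [ZMOD 9]) (hB : B ≡ 0 [ZMOD 9]) :
    (∃ t : Fin 5 → ℚ_[3], t ≠ 0 ∧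
        (t 2) ^ 2 - (D : ℚ_[3]) * (t 3) ^ 2 - t 0 * t 1 = 0 ∧
        (t 2) ^ 2 - (D : ℚ_[3]) * (t 4) ^ 2 -
          (t 0 + (A : ℚ_[3]) * t 1) * (t 0 + (B : ℚ_[3]) * t 1) = 0) ∧
    (∀ t : Fin 5 → ℚ_[3], t ≠ 0 →
        (t 2) ^ 2 - (D : ℚ_[3]) * (t 3) ^ 2 - t 0 * t 1 = 0 →
        (t 2) ^ 2 - (D : ℚ_[3]) * (t 4) ^ 2 -
          (t 0 + (A : ℚ_[3]) * t 1) * (t 0 + (B : ℚ_[3]) * t 1) = 0 →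
        ∀ u v : ℚ_[3],
          (u = t 0 ∨ u = t 1) →
          (v = t 0 + (A : ℚ_[3]) * t 1 ∨ v = t 0 + (B : ℚ_[3]) * t 1) →
          u * v ≠ 0 →
          ∃ x y : ℚ_[3], u * v = x ^ 2 - (D : ℚ_[3]) * y ^ 2) := by
  -- extract arithmetic data
  obtain ⟨m, hDm⟩ := h3D
  have hm : ¬ (3:ℤ) ∣ m := by
    intro ⟨k, hk⟩
    have h9 : (3*3 : ℤ) ∣ D := ⟨k, by omega⟩
    have := hsf 3 h9
    rw [Int.isUnit_iff] at this
    omega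
  have h9A : (9:ℤ) ∣ (-D - A) := Int.ModEq.dvd hA
  obtain ⟨k, hk⟩ := h9A
  have h9B : (9:ℤ) ∣ B := by
    have := Int.ModEq.dvd hB
    omega
  obtain ⟨b₁, hBb⟩ := h9B
  set a₁ : ℤ := -m - 3*k with ha₁d
  have hAa : A = 3*a₁ := by omega
  have ham : (3:ℤ) ∣ (a₁ + m) := ⟨-k, by omega⟩
  constructor
  · -- existence
    set ℓ : ℤ := 3*(a₁+3*b₁)^2 - 2*(a₁+3*b₁) - 36*a₁*b₁ with hℓd
    have hdisc : (((A+B-1)^2 - 4*A*B : ℤ) : K) - 1 = (3:K)*((ℓ:ℤ):K) := by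
      push_cast [hAa, hBb, hℓd]
      ring
    have hd1 : ‖(((A+B-1)^2 - 4*A*B : ℤ) : K) - 1‖ < 1 := by
      rw [hdisc, norm_mul, norm3K]
      have := Padic.norm_int_le_one (p := 3) ℓ
      nlinarith [norm_nonneg ((ℓ:ℤ):K)]
    obtain ⟨z, hz, hz1⟩ := sqK hd1
    have hzK : z^2 = ((A:K)+(B:K)-1)^2 - 4*(A:K)*(B:K) := by
      rw [hz]; push_cast; ring
    set x : K := (1 - (A:K) - (B:K) + z)/2 with hxd
    have h2K : (2:K) ≠ 0 := by
      intro h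
      have := two_normK
      rw [h] at this
      simp at this
    have hx : (2:K)*x = 1 - (A:K) - (B:K) + z := by
      rw [hxd]; field_simp
    have hx2 : x^2 + ((A:K)+(B:K)-1)*x + (A:K)*(B:K) = 0 := by
      linear_combination ((2*x + (A:K)+(B:K)+z-1)/4)*hx + (1/4)*hzK
    have hx1 : ‖x - 1‖ < 1 := by
      have he : x - 1 = ((z-1) - (A:K) - (B:K))/2 := by rw [hxd]; ring
      rw [he, norm_div, two_normK, div_one]
      have normA : ‖(A:K)‖ = 3⁻¹ := by
        have hma : ¬ (3:ℤ) ∣ a₁ := by intro h; exact hm (by omega)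
        rw [hAa]; push_cast; rw [norm_mul, norm3K, norm_int_K hma]; ring
      have normB : ‖(B:K)‖ < 1 := by
        rcases eq_or_ne (B:K) 0 with h | h
        · rw [h]; simp
        · calc ‖(B:K)‖ ≤ 3⁻¹ := by
                apply K_norm_le_third
                rw [Padic.norm_intCast_lt_one_iff]
                have hdB : (3:ℤ) ∣ B := ⟨3*b₁, by omega⟩
                exact_mod_cast hdB
            _ < 1 := by norm_num
      calc ‖((z-1) - (A:K)) - (B:K)‖ ≤ max ‖(z-1) - (A:K)‖ ‖(B:K)‖ := nsub_le_max _ _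
        _ ≤ max (max ‖z-1‖ ‖(A:K)‖) ‖(B:K)‖ := by
            apply max_le_max_right
            exact nsub_le_max _ _
        _ < 1 := by
            apply max_lt
            · apply max_lt hz1
              rw [normA]; norm_num
            · exact normB
    obtain ⟨y, hy, -⟩ := sqK hx1
    refine ⟨![x, 1, y, 0, 0], ?_, ?_, ?_⟩
    · intro h
      have := congrFun h 1
      simp at this
    · show y^2 - (D:K)*(0:K)^2 - x*1 = 0
      linear_combination hy
    · show y^2 - (D:K)*(0:K)^2 - (x + (A:K)*1)*(x + (B:K)*1) = 0
      linear_combination hy - hx2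
  · -- constancy
    intro t ht he1 he2 u v hu hv huv
    obtain ⟨j, -, hjmax⟩ := Finset.exists_max_image (Finset.univ : Finset (Fin 5))
      (fun i => ‖t i‖) ⟨0, Finset.mem_univ 0⟩
    have htj : t j ≠ 0 := by
      intro hz
      apply ht
      funext i
      have h5 := hjmax i (Finset.mem_univ i)
      rw [hz] at h5
      simp at h5
      exact h5
    have hprod : ‖(t j)⁻¹‖ * ‖t j‖ = 1 := by
      rw [norm_inv]
      exact inv_mul_cancel₀ (norm_ne_zero_iff.2 htj)
    have hni : ∀ i, ‖(t j)⁻¹ * t i‖ ≤ 1 := by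
      intro i
      rw [norm_mul]
      calc ‖(t j)⁻¹‖ * ‖t i‖ ≤ ‖(t j)⁻¹‖ * ‖t j‖ :=
            mul_le_mul_of_nonneg_left (hjmax i (Finset.mem_univ i)) (norm_nonneg _)
        _ = 1 := hprod
    have hjnorm : ‖(t j)⁻¹ * t j‖ = 1 := by rw [norm_mul]; exact hprod
    have hmax5 : ‖(t j)⁻¹ * t 0‖ = 1 ∨ ‖(t j)⁻¹ * t 1‖ = 1 ∨ ‖(t j)⁻¹ * t 2‖ = 1 ∨
        ‖(t j)⁻¹ * t 3‖ = 1 ∨ ‖(t j)⁻¹ * t 4‖ = 1 := by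
      fin_cases j
      · exact Or.inl hjnorm
      · exact Or.inr (Or.inl hjnorm)
      · exact Or.inr (Or.inr (Or.inl hjnorm))
      · exact Or.inr (Or.inr (Or.inr (Or.inl hjnorm)))
      · exact Or.inr (Or.inr (Or.inr (Or.inr hjnorm)))
    have e1' : ((t j)⁻¹ * t 2)^2 - (D:K)*((t j)⁻¹ * t 3)^2 -
        ((t j)⁻¹ * t 0)*((t j)⁻¹ * t 1) = 0 := by
      linear_combination ((t j)⁻¹)^2 * he1
    have e2' : ((t j)⁻¹ * t 2)^2 - (D:K)*((t j)⁻¹ * t 4)^2 -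
        (((t j)⁻¹ * t 0) + (A:K)*((t j)⁻¹ * t 1))*(((t j)⁻¹ * t 0) + (B:K)*((t j)⁻¹ * t 1))
        = 0 := by
      linear_combination ((t j)⁻¹)^2 * he2
    have hu' : (t j)⁻¹ * u = (t j)⁻¹ * t 0 ∨ (t j)⁻¹ * u = (t j)⁻¹ * t 1 := by
      rcases hu with rfl | rfl
      · exact Or.inl rfl
      · exact Or.inr rfl
    have hv' : (t j)⁻¹ * v = ((t j)⁻¹ * t 0) + (A:K)*((t j)⁻¹ * t 1) ∨
        (t j)⁻¹ * v = ((t j)⁻¹ * t 0) + (B:K)*((t j)⁻¹ * t 1) := by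
      rcases hv with rfl | rfl
      · exact Or.inl (by ring)
      · exact Or.inr (by ring)
    have huv' : ((t j)⁻¹ * u) * ((t j)⁻¹ * v) ≠ 0 := by
      apply mul_ne_zero
      · exact mul_ne_zero (inv_ne_zero htj) (left_ne_zero_of_mul huv)
      · exact mul_ne_zero (inv_ne_zero htj) (right_ne_zero_of_mul huv)
    obtain ⟨x, y, hxy⟩ := key_all D A B m a₁ b₁ hDm hm hAa ham hBb
      ((t j)⁻¹ * t 0) ((t j)⁻¹ * t 1) ((t j)⁻¹ * t 2) ((t j)⁻¹ * t 3) ((t j)⁻¹ * t 4)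
      (hni 0) (hni 1) (hni 2) (hni 3) (hni 4) hmax5 e1' e2'
      ((t j)⁻¹ * u) ((t j)⁻¹ * v) hu' hv' huv'
    refine ⟨x*(t j), y*(t j), ?_⟩
    have hinv : (t j)*(t j)⁻¹ = 1 := mul_inv_cancel₀ htj
    linear_combination (t j)^2*hxy - (u*v*(1 + (t j)*(t j)⁻¹))*hinv
end
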